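/- Under the hypotheses of the fibre-product construction (T and Y geodesic, c : T → ℝ and b : Y → ℝ 1-Lipschitz admitting through every point a geodesic line along which they increase at unit speed), the shortest-path metric d_M on M = {(x,y) : c(x) = b(y)} satisfies d ≤ d_M ≤ 4·d, where d is the restriction of the sum metric on T × Y; hence d and d_M are bilipschitz equivalent. -/

import Mathlib

/-- A pseudometric space is geodesic if any two points are joined by a geodesic segment. -/
def IsGeodesicSpace (X : Type*) [PseudoMetricSpace X] : Prop :=
  ∀ x y : X, ∃ γ : ℝ → X, γ 0 = x ∧ γ (dist x y) = y ∧
    ∀ s ∈ Set.Icc (0 : ℝ) (dist x y), ∀ t ∈ Set.Icc (0 : ℝ) (dist x y),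
      dist (γ s) (γ t) = |s - t|

/-- `γ : ℝ → X` is a geodesic line: an isometric embedding of `ℝ`. -/
def IsGeodesicLine {X : Type*} [PseudoMetricSpace X] (γ : ℝ → X) : Prop :=
  ∀ s t : ℝ, dist (γ s) (γ t) = |s - t|

/-- The shortest-path (length) metric on a subset `M` of a pseudometric space: the infimum of
lengths (total variations) of continuous paths in `M` joining two points. -/
noncomputable def pathMetric {X : Type*} [PseudoMetricSpace X] (M : Set X) (p q : X) : ENNReal :=
  ⨅ (γ : ℝ → X) (_ : ContinuousOn γ (Set.Icc (0 : ℝ) 1))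
    (_ : Set.MapsTo γ (Set.Icc (0 : ℝ) 1) M) (_ : γ 0 = p) (_ : γ 1 = q),
    eVariationOn γ (Set.Icc (0 : ℝ) 1)

open Set

lemma aux_pathMetric_lower {X : Type*} [PseudoMetricSpace X] (M : Set X) (p q : X) :
    ENNReal.ofReal (dist p q) ≤ pathMetric M p q := by
  rw [← edist_dist]
  refine le_iInf fun γ => le_iInf fun _ => le_iInf fun _ => le_iInf fun h0 => le_iInf fun h1 => ?_
  rw [← h0, ← h1]
  exact eVariationOn.edist_le γ (left_mem_Icc.2 zero_le_one) (right_mem_Icc.2 zero_le_one)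

lemma aux_pathMetric_le {X : Type*} [PseudoMetricSpace X] {M : Set X} {p q : X} {γ : ℝ → X}
    (h1 : ContinuousOn γ (Icc 0 1)) (h2 : MapsTo γ (Icc 0 1) M)
    (h3 : γ 0 = p) (h4 : γ 1 = q) :
    pathMetric M p q ≤ eVariationOn γ (Icc 0 1) :=
  iInf_le_of_le γ <| iInf_le_of_le h1 <| iInf_le_of_le h2 <| iInf_le_of_le h3 <| iInf_le _ h4

lemma aux_lip_congr {X : Type*} [PseudoMetricSpace X] {f g : ℝ → X} {K : NNReal} {s : Set ℝ}
    (h : LipschitzOnWith K f s) (he : Set.EqOn f g s) : LipschitzOnWith K g s :=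
  fun x hx y hy => by rw [← he hx, ← he hy]; exact h hx hy

lemma aux_lip_weaken {X : Type*} [PseudoMetricSpace X] {f : ℝ → X} {K K' : NNReal} {s : Set ℝ}
    (h : LipschitzOnWith K f s) (hK : K ≤ K') : LipschitzOnWith K' f s :=
  fun x hx y hy => (h hx hy).trans (mul_le_mul_of_nonneg_right (ENNReal.coe_le_coe.2 hK) (by simp))

lemma aux_lip_glue {X : Type*} [PseudoMetricSpace X] {f : ℝ → X} {K : NNReal} {a b c : ℝ}
    (hab : a ≤ b) (hbc : b ≤ c)
    (h1 : LipschitzOnWith K f (Icc a b)) (h2 : LipschitzOnWith K f (Icc b c)) :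
    LipschitzOnWith K f (Icc a c) := by
  rw [lipschitzOnWith_iff_dist_le_mul] at h1 h2 ⊢
  have key : ∀ x ∈ Icc a c, ∀ y ∈ Icc a c, x ≤ y → dist (f x) (f y) ≤ K * dist x y := by
    intro x hx y hy hxy
    rcases le_total y b with h | h
    · exact h1 x ⟨hx.1, hxy.trans h⟩ y ⟨hy.1, h⟩
    rcases le_total b x with h' | h'
    · exact h2 x ⟨h', hx.2⟩ y ⟨h'.trans hxy, hy.2⟩
    · have d1 := h1 x ⟨hx.1, h'⟩ b ⟨hab, le_rfl⟩
      have d2 := h2 b ⟨le_rfl, hbc⟩ y ⟨h, hy.2⟩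
      have tri : dist (f x) (f y) ≤ dist (f x) (f b) + dist (f b) (f y) := dist_triangle _ _ _
      rw [Real.dist_eq] at d1 d2 ⊢
      have e1 : |x - b| = -(x - b) := abs_of_nonpos (by linarith)
      have e2 : |b - y| = -(b - y) := abs_of_nonpos (by linarith)
      have e3 : |x - y| = -(x - y) := abs_of_nonpos (by linarith)
      rw [e1] at d1; rw [e2] at d2; rw [e3]
      have : (K:ℝ) * (-(x - b)) + (K:ℝ) * (-(b - y)) = (K:ℝ) * (-(x - y)) := by ring
      linarith
  intro x hx y hy
  rcases le_total x y with h | h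
  · exact key x hx y hy h
  · rw [dist_comm, dist_comm x y]; exact key y hy x hx h

lemma aux_lip_evar {X : Type*} [PseudoMetricSpace X] {f : ℝ → X} {K : NNReal} {a b : ℝ}
    (h : LipschitzOnWith K f (Icc a b)) :
    eVariationOn f (Icc a b) ≤ K * ENNReal.ofReal (b - a) := by
  rcases le_or_gt a b with hab | hab
  · have h1 : eVariationOn (f ∘ id) (Icc a b) ≤ K * eVariationOn id (Icc a b) :=
      h.comp_eVariationOn_le (Set.mapsTo_id _)
    have h2 : eVariationOn (id : ℝ → ℝ) (Icc a b) ≤ ENNReal.ofReal (b - a) := by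
      have := (monotoneOn_id (s := Icc a b)).eVariationOn_le
        (left_mem_Icc.2 hab) (right_mem_Icc.2 hab)
      simpa [Set.inter_eq_self_of_subset_left (Icc_subset_Icc le_rfl le_rfl)] using this
    calc eVariationOn f (Icc a b) = eVariationOn (f ∘ id) (Icc a b) := rfl
      _ ≤ K * eVariationOn id (Icc a b) := h1
      _ ≤ K * ENNReal.ofReal (b - a) := mul_le_mul_of_nonneg_left h2 (by simp)
  · rw [Icc_eq_empty hab.not_ge, eVariationOn.subsingleton f Set.subsingleton_empty]
    simp

/-- under the fibre-product hypotheses (`T`, `Y` geodesic, `c`, `b` 1-Lipschitz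
admitting through every point a unit-speed geodesic line), the shortest-path metric `d_M` on
`M = {(x,y) : c x = b y}` satisfies `d ≤ d_M ≤ 4 d`, where `d` is the sum metric of `T × Y`;
hence `d` and `d_M` are bilipschitz equivalent. -/
theorem fibreProduct_pathMetric_bilipschitz
    {T Y : Type*} [MetricSpace T] [MetricSpace Y]
    (hT : IsGeodesicSpace T) (hY : IsGeodesicSpace Y)
    (c : T → ℝ) (b : Y → ℝ)
    (hc : LipschitzWith 1 c) (hb : LipschitzWith 1 b)
    (hlineT : ∀ x : T, ∃ β : ℝ → T, IsGeodesicLine β ∧ β 0 = x ∧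
      ∀ u : ℝ, c (β u) = c x + u)
    (hlineY : ∀ y : Y, ∃ α : ℝ → Y, IsGeodesicLine α ∧ α 0 = y ∧
      ∀ u : ℝ, b (α u) = b y + u)
    -- `T × Y` is equipped with the sum metric
    (inst : PseudoMetricSpace (T × Y))
    (hinst : ∀ p q : T × Y, @dist _ inst.toDist p q = dist p.1 q.1 + dist p.2 q.2) :
    ∀ p ∈ {p : T × Y | c p.1 = b p.2}, ∀ q ∈ {p : T × Y | c p.1 = b p.2},
      ENNReal.ofReal (@dist _ inst.toDist p q) ≤
          @pathMetric (T × Y) inst {p : T × Y | c p.1 = b p.2} p q ∧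
        @pathMetric (T × Y) inst {p : T × Y | c p.1 = b p.2} p q ≤
          ENNReal.ofReal (4 * @dist _ inst.toDist p q) := by
  letI : PseudoMetricSpace (T × Y) := inst
  letI : PseudoEMetricSpace (T × Y) := inst.toPseudoEMetricSpace
  letI : UniformSpace (T × Y) := inst.toUniformSpace
  letI : TopologicalSpace (T × Y) := inst.toUniformSpace.toTopologicalSpace
  intro p hp q hq
  simp only [Set.mem_setOf_eq] at hp hq
  refine ⟨aux_pathMetric_lower _ p q, ?_⟩
  -- set up the two-leg path
  obtain ⟨σ, hσ0, hσ1, hσd⟩ := hT p.1 q.1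
  obtain ⟨α, hα, hα0, hαb⟩ := hlineY p.2
  set L1 : ℝ := dist p.1 q.1 with hL1
  set y' : Y := α (c q.1 - b p.2) with hy'def
  have hby' : b y' = c q.1 := by rw [hy'def, hαb]; ring
  obtain ⟨β, hβ, hβ0, hβc⟩ := hlineT q.1
  obtain ⟨τ, hτ0, hτ1, hτd⟩ := hY y' q.2
  set L2 : ℝ := dist y' q.2 with hL2
  have hL1nn : 0 ≤ L1 := dist_nonneg
  have hL2nn : 0 ≤ L2 := dist_nonneg
  set g1 : ℝ → T × Y := fun t => (σ (2*t*L1), α (c (σ (2*t*L1)) - b p.2)) with hg1def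
  set g2 : ℝ → T × Y := fun t => (β (b (τ ((2*t-1)*L2)) - c q.1), τ ((2*t-1)*L2)) with hg2def
  set γ : ℝ → T × Y := fun t => if t ≤ 1/2 then g1 t else g2 t with hγdef
  -- parameter ranges
  have hpar1 : ∀ t ∈ Icc (0:ℝ) (1/2), 2*t*L1 ∈ Icc 0 L1 := by
    rintro t ⟨h0, h1⟩
    constructor
    · positivity
    · nlinarith
  have hpar2 : ∀ t ∈ Icc (1/2:ℝ) 1, (2*t-1)*L2 ∈ Icc 0 L2 := by
    rintro t ⟨h0, h1⟩
    constructor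
    · nlinarith
    · nlinarith
  -- the glue point
  have hglue : g1 (1/2) = g2 (1/2) := by
    have e1 : 2*(1/2:ℝ)*L1 = L1 := by ring
    have e2 : (2*(1/2:ℝ)-1)*L2 = 0 := by ring
    rw [hg1def, hg2def]
    simp only [e1, e2]
    rw [hσ1, hτ0, hby', sub_self, hβ0]
  -- Lipschitz bounds on the two legs
  have hlip1 : LipschitzOnWith (Real.toNNReal (4*L1)) g1 (Icc 0 (1/2)) := by
    rw [lipschitzOnWith_iff_dist_le_mul]
    intro s hs t ht
    rw [hinst]
    have hs' := hpar1 s hs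
    have ht' := hpar1 t ht
    have h1 : dist (g1 s).1 (g1 t).1 = |2*s*L1 - 2*t*L1| := hσd _ hs' _ ht'
    have h2 : dist (g1 s).2 (g1 t).2 = |c (σ (2*s*L1)) - c (σ (2*t*L1))| := by
      rw [hg1def]
      simp only
      rw [hα]
      congr 1
      ring
    have h3 : |c (σ (2*s*L1)) - c (σ (2*t*L1))| ≤ dist (σ (2*s*L1)) (σ (2*t*L1)) := by
      have := hc.dist_le_mul (σ (2*s*L1)) (σ (2*t*L1))
      rw [Real.dist_eq] at this
      simpa using this
    have h1' : dist (σ (2*s*L1)) (σ (2*t*L1)) = |2*s*L1 - 2*t*L1| := hσd _ hs' _ ht'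
    have habs : |2*s*L1 - 2*t*L1| = 2*L1*|s - t| := by
      rw [show 2*s*L1 - 2*t*L1 = (2*L1)*(s-t) by ring, abs_mul,
        abs_of_nonneg (by positivity : (0:ℝ) ≤ 2*L1)]
    have hco : (Real.toNNReal (4*L1) : ℝ) = 4*L1 := Real.coe_toNNReal _ (by positivity)
    rw [Real.dist_eq, hco, h1, h2]
    rw [h1', habs] at h3
    rw [habs]
    nlinarith [abs_nonneg (s - t)]
  have hlip2 : LipschitzOnWith (Real.toNNReal (4*L2)) g2 (Icc (1/2) 1) := by
    rw [lipschitzOnWith_iff_dist_le_mul]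
    intro s hs t ht
    rw [hinst]
    have hs' := hpar2 s hs
    have ht' := hpar2 t ht
    have h1 : dist (g2 s).2 (g2 t).2 = |(2*s-1)*L2 - (2*t-1)*L2| := hτd _ hs' _ ht'
    have h2 : dist (g2 s).1 (g2 t).1 = |b (τ ((2*s-1)*L2)) - b (τ ((2*t-1)*L2))| := by
      rw [hg2def]
      simp only
      rw [hβ]
      congr 1
      ring
    have h3 : |b (τ ((2*s-1)*L2)) - b (τ ((2*t-1)*L2))| ≤
        dist (τ ((2*s-1)*L2)) (τ ((2*t-1)*L2)) := by
      have := hb.dist_le_mul (τ ((2*s-1)*L2)) (τ ((2*t-1)*L2))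
      rw [Real.dist_eq] at this
      simpa using this
    have h1' : dist (τ ((2*s-1)*L2)) (τ ((2*t-1)*L2)) = |(2*s-1)*L2 - (2*t-1)*L2| :=
      hτd _ hs' _ ht'
    have habs : |(2*s-1)*L2 - (2*t-1)*L2| = 2*L2*|s - t| := by
      rw [show (2*s-1)*L2 - (2*t-1)*L2 = (2*L2)*(s-t) by ring, abs_mul,
        abs_of_nonneg (by positivity : (0:ℝ) ≤ 2*L2)]
    have hco : (Real.toNNReal (4*L2) : ℝ) = 4*L2 := Real.coe_toNNReal _ (by positivity)
    rw [Real.dist_eq, hco, h1, h2]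
    rw [h1', habs] at h3
    rw [habs]
    nlinarith [abs_nonneg (s - t)]
  -- γ agrees with the legs
  have heq1 : Set.EqOn g1 γ (Icc 0 (1/2)) := by
    intro t ht
    rw [hγdef]
    simp only [if_pos ht.2]
  have heq2 : Set.EqOn g2 γ (Icc (1/2) 1) := by
    intro t ht
    rw [hγdef]
    simp only
    by_cases h : t ≤ 1/2
    · have : t = 1/2 := le_antisymm h ht.1
      rw [if_pos h, this, ← hglue]
    · rw [if_neg h]
  have hlipγ1 : LipschitzOnWith (Real.toNNReal (4*L1)) γ (Icc 0 (1/2)) :=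
    aux_lip_congr hlip1 heq1
  have hlipγ2 : LipschitzOnWith (Real.toNNReal (4*L2)) γ (Icc (1/2) 1) :=
    aux_lip_congr hlip2 heq2
  set K : NNReal := Real.toNNReal (4*L1) ⊔ Real.toNNReal (4*L2) with hK
  have hlipγ : LipschitzOnWith K γ (Icc 0 1) :=
    aux_lip_glue (by norm_num) (by norm_num)
      (aux_lip_weaken hlipγ1 le_sup_left) (aux_lip_weaken hlipγ2 le_sup_right)
  -- path properties
  have hcont : ContinuousOn γ (Icc 0 1) := hlipγ.continuousOn
  have hmaps : MapsTo γ (Icc 0 1) {p : T × Y | c p.1 = b p.2} := by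
    intro t _
    rw [hγdef]
    simp only [Set.mem_setOf_eq]
    by_cases h : t ≤ 1/2
    · rw [if_pos h, hg1def]
      simp only
      rw [hαb]
      ring
    · rw [if_neg h, hg2def]
      simp only
      rw [hβc]
      ring
  have hstart : γ 0 = p := by
    have h1 : γ 0 = g1 0 := by rw [hγdef]; norm_num
    rw [h1, hg1def]
    simp only [mul_zero, zero_mul, hσ0]
    rw [hp, sub_self, hα0]
  have hend : γ 1 = q := by
    have h1 : γ 1 = g2 1 := by rw [hγdef]; norm_num
    rw [h1, hg2def]
    simp only [show (2*(1:ℝ)-1)*L2 = L2 by ring]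
    rw [hτ1, show b q.2 = c q.1 from hq.symm, sub_self, hβ0]
  -- length estimate
  have hsplit : eVariationOn γ (Icc 0 (1/2)) + eVariationOn γ (Icc (1/2) 1) =
      eVariationOn γ (Icc 0 1) := by
    have := eVariationOn.Icc_add_Icc γ (s := Set.univ)
      (by norm_num : (0:ℝ) ≤ 1/2) (by norm_num : (1/2:ℝ) ≤ 1) (Set.mem_univ _)
    simpa [Set.univ_inter] using this
  have hvar1 : eVariationOn γ (Icc 0 (1/2)) ≤ ENNReal.ofReal (2*L1) := by
    have := aux_lip_evar hlipγ1
    refine this.trans ?_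
    rw [show ((Real.toNNReal (4*L1) : NNReal) : ENNReal) = ENNReal.ofReal (4*L1) from rfl,
      ← ENNReal.ofReal_mul (by positivity)]
    apply ENNReal.ofReal_le_ofReal
    nlinarith
  have hvar2 : eVariationOn γ (Icc (1/2) 1) ≤ ENNReal.ofReal (2*L2) := by
    have := aux_lip_evar hlipγ2
    refine this.trans ?_
    rw [show ((Real.toNNReal (4*L2) : NNReal) : ENNReal) = ENNReal.ofReal (4*L2) from rfl,
      ← ENNReal.ofReal_mul (by positivity)]
    apply ENNReal.ofReal_le_ofReal
    nlinarith
  -- L2 ≤ L1 + dist p.2 q.2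
  have hL2le : L2 ≤ L1 + dist p.2 q.2 := by
    have h1 : dist y' p.2 = |c q.1 - b p.2| := by
      rw [hy'def, ← hα0]
      rw [hα]
      congr 1
      ring
    have h2 : |c q.1 - b p.2| ≤ L1 := by
      rw [← hp]
      have := hc.dist_le_mul q.1 p.1
      rw [Real.dist_eq] at this
      rw [hL1, dist_comm]
      rw [show |c q.1 - c p.1| = |c q.1 - c p.1| from rfl]
      simpa using this
    calc L2 ≤ dist y' p.2 + dist p.2 q.2 := dist_triangle _ _ _
      _ ≤ L1 + dist p.2 q.2 := by rw [h1]; linarith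
  calc pathMetric {p : T × Y | c p.1 = b p.2} p q ≤ eVariationOn γ (Icc 0 1) :=
        aux_pathMetric_le hcont hmaps hstart hend
    _ = eVariationOn γ (Icc 0 (1/2)) + eVariationOn γ (Icc (1/2) 1) := hsplit.symm
    _ ≤ ENNReal.ofReal (2*L1) + ENNReal.ofReal (2*L2) := add_le_add hvar1 hvar2
    _ = ENNReal.ofReal (2*L1 + 2*L2) := (ENNReal.ofReal_add (by positivity) (by positivity)).symm
    _ ≤ ENNReal.ofReal (4 * @dist _ inst.toDist p q) := by
        apply ENNReal.ofReal_le_ofReal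
        rw [hinst]
        have := dist_nonneg (x := p.2) (y := q.2)
        nlinarith
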